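/- Let p > q be prime numbers with p ≡ 1 (mod q), let H be a group of order pq and G a finite group whose order divides p²q², and let α : G →* MulAut H be an action of G on H by automorphisms. If the fixed-point subgroup H^G is trivial (|H^G| = 1), then every non-trivial orbit has size p, q, or q², the number of orbits of size p equals q − 1, and c(q) + q·c(q²) = (p − 1)/q, where c(m) denotes the number of orbits of size exactly m. -/

import Mathlib

/-- The orbit of `a : H` under the action of `G` on `H` via `α`. -/
def orbitOf {G H : Type*} [Group G] [Group H] (α : G →* MulAut H) (a : H) : Set H :=
  Set.range fun g : G => α g a

section Aux

variable {G H : Type*} [Group G] [Group H]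

lemma mem_orbitOf_self (α : G →* MulAut H) (a : H) : a ∈ orbitOf α a :=
  ⟨1, by simp⟩

lemma orbitOf_eq_of_mem (α : G →* MulAut H) {a b : H} (h : b ∈ orbitOf α a) :
    orbitOf α b = orbitOf α a := by
  obtain ⟨g, rfl⟩ := h
  ext x
  constructor
  · rintro ⟨g', rfl⟩
    exact ⟨g' * g, by simp [map_mul]⟩
  · rintro ⟨g', rfl⟩
    refine ⟨g' * g⁻¹, ?_⟩
    simp [map_mul]

lemma orbitOf_one (α : G →* MulAut H) : orbitOf α (1 : H) = {1} := by
  ext x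
  constructor
  · rintro ⟨g, rfl⟩; simp
  · rintro rfl; exact ⟨1, by simp⟩

lemma countOrbits [Finite H] (α : G →* MulAut H) (m : ℕ) :
    Nat.card {L : Set H // (∃ a : H, L = orbitOf α a) ∧ L.ncard = m} * m =
      {x : H | (orbitOf α x).ncard = m}.ncard := by
  classical
  have key : ∀ (L : Set H), (∃ a : H, L = orbitOf α a) → ∀ y ∈ L, orbitOf α y = L := by
    rintro L ⟨a, rfl⟩ y hy
    exact orbitOf_eq_of_mem α hy
  set 𝒪 := {L : Set H // (∃ a : H, L = orbitOf α a) ∧ L.ncard = m} with h𝒪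
  set S := {x : H | (orbitOf α x).ncard = m} with hS
  haveI := Fintype.ofFinite H
  haveI : Fintype 𝒪 := Fintype.ofFinite _
  haveI : Fintype ↥S := Fintype.ofFinite _
  let f : ↥S → 𝒪 := fun x => ⟨orbitOf α x.1, ⟨x.1, rfl⟩, x.2⟩
  have e2 : ∀ L : 𝒪, {x : ↥S // f x = L} ≃ {y : H // y ∈ L.1} := by
    intro L
    refine ⟨fun x => ⟨x.1.1, ?_⟩, fun y => ⟨⟨y.1, ?_⟩, ?_⟩, ?_, ?_⟩
    · have hx : orbitOf α x.1.1 = L.1 := congrArg Subtype.val x.2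
      exact hx ▸ mem_orbitOf_self α x.1.1
    · show (orbitOf α y.1).ncard = m
      rw [key L.1 L.2.1 y.1 y.2]
      exact L.2.2
    · exact Subtype.ext (key L.1 L.2.1 y.1 y.2)
    · intro x; exact Subtype.ext (Subtype.ext rfl)
    · intro y; rfl
  have hcardL : ∀ L : 𝒪, Nat.card {y : H // y ∈ L.1} = m := fun L => by
    have h1 : Nat.card {y : H // y ∈ L.1} = L.1.ncard := Nat.card_coe_set_eq L.1
    rw [h1]; exact L.2.2
  haveI : ∀ L : 𝒪, Fintype {x : ↥S // f x = L} := fun L => Fintype.ofFinite _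
  have hsum : Nat.card ↥S = ∑ L : 𝒪, Nat.card {x : ↥S // f x = L} := by
    rw [Nat.card_congr (Equiv.sigmaFiberEquiv f).symm, Nat.card_eq_fintype_card,
      Fintype.card_sigma]
    exact Finset.sum_congr rfl fun L _ => (Nat.card_eq_fintype_card).symm
  calc Nat.card 𝒪 * m = ∑ _L : 𝒪, m := by
        rw [Finset.sum_const, smul_eq_mul, Nat.card_eq_fintype_card, Finset.card_univ]
    _ = ∑ L : 𝒪, Nat.card {x : ↥S // f x = L} := by
        refine Finset.sum_congr rfl fun L _ => ?_
        rw [Nat.card_congr (e2 L), hcardL L]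
    _ = Nat.card ↥S := hsum.symm
    _ = S.ncard := Nat.card_coe_set_eq S

end Aux

theorem stmt_13 {G H : Type*} [Group G] [Group H] [Finite G] [Finite H]
    {p q : ℕ} (hp : p.Prime) (hq : q.Prime) (hlt : q < p) (hmod : p ≡ 1 [MOD q])
    (hH : Nat.card H = p * q) (hG : Nat.card G ∣ p ^ 2 * q ^ 2)
    (α : G →* MulAut H)
    (hfix : Nat.card {h : H // ∀ g : G, α g h = h} = 1) :
    (∀ a : H, 1 < (orbitOf α a).ncard →
      (orbitOf α a).ncard = p ∨ (orbitOf α a).ncard = q ∨ (orbitOf α a).ncard = q ^ 2) ∧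
    Nat.card {L : Set H // (∃ a : H, L = orbitOf α a) ∧ L.ncard = p} = q - 1 ∧
    Nat.card {L : Set H // (∃ a : H, L = orbitOf α a) ∧ L.ncard = q} +
      q * Nat.card {L : Set H // (∃ a : H, L = orbitOf α a) ∧ L.ncard = q ^ 2} =
        (p - 1) / q := by
  classical
  haveI : Fact p.Prime := ⟨hp⟩
  haveI : Fact q.Prime := ⟨hq⟩
  have hp1 : 1 < p := hp.one_lt
  have hq1 : 1 < q := hq.one_lt
  have hq2p : q ^ 2 ≠ p := by
    intro h
    have h1 : q ∣ p := h ▸ dvd_pow_self q two_ne_zero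
    have := (Nat.prime_dvd_prime_iff_eq hq hp).mp h1
    omega
  have hfix' : ∀ x : H, (∀ g : G, α g x = x) → x = 1 := by
    intro x hx
    obtain ⟨hsub, -⟩ := Nat.card_eq_one_iff_unique.mp hfix
    exact congrArg Subtype.val (hsub.elim ⟨x, hx⟩ ⟨1, fun g => map_one (α g)⟩)
  -- the Sylow p-subgroup of H
  obtain ⟨P⟩ : Nonempty (Sylow p H) := inferInstance
  have hPcard : Nat.card (P : Subgroup H) = p := by
    rw [Sylow.card_eq_multiplicity, hH, Nat.factorization_mul hp.pos.ne' hq.pos.ne',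
      Finsupp.add_apply, hp.factorization, hq.factorization, Finsupp.single_apply,
      Finsupp.single_apply, if_pos rfl, if_neg (Nat.ne_of_lt hlt)]
    norm_num
  have hPindex : (P : Subgroup H).index = q := by
    have h := Subgroup.card_mul_index (P : Subgroup H)
    rw [hPcard, hH] at h
    exact Nat.eq_of_mul_eq_mul_left hp.pos h
  have hcard_sylow : Nat.card (Sylow p H) = 1 := by
    have h1 : Nat.card (Sylow p H) ∣ q := hPindex ▸ Sylow.card_dvd_index P
    rcases hq.eq_one_or_self_of_dvd _ h1 with h | h
    · exact h
    · exfalso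
      have h2 := card_sylow_modEq_one p H
      rw [h] at h2
      have h3 : p ∣ q - 1 := (Nat.modEq_iff_dvd' (le_of_lt hq1)).mp h2.symm
      have h4 : p ≤ q - 1 := Nat.le_of_dvd (by omega) h3
      omega
  haveI hsubsing : Subsingleton (Sylow p H) := (Nat.card_eq_one_iff_unique.mp hcard_sylow).1
  have hPnormal : (P : Subgroup H).Normal := by
    rw [← Subgroup.normalizer_eq_top_iff, Subgroup.eq_top_iff']
    intro g
    exact Sylow.smul_eq_iff_mem_normalizer.mp (Subsingleton.elim _ _)
  haveI hPchar : (P : Subgroup H).Characteristic := P.characteristic_of_normal hPnormal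
  have hPmem : ∀ (φ : MulAut H) (x : H), φ x ∈ (P : Subgroup H) ↔ x ∈ (P : Subgroup H) := by
    intro φ x
    conv_rhs => rw [← Subgroup.characteristic_iff_comap_eq.mp hPchar φ]
    exact Iff.symm Subgroup.mem_comap
  -- the image of α
  set A : Subgroup (MulAut H) := α.range with hA
  haveI : Finite A := Finite.of_surjective (fun g : G => (⟨α g, ⟨g, rfl⟩⟩ : A))
    (by rintro ⟨φ, g, rfl⟩; exact ⟨g, rfl⟩)
  have hAdvd : Nat.card A ∣ p ^ 2 * q ^ 2 := by
    have h1 : Nat.card A = α.ker.index := by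
      rw [Subgroup.index_eq_card]
      exact (Nat.card_congr (QuotientGroup.quotientKerEquivRange α).toEquiv).symm
    rw [h1]
    exact (Subgroup.index_dvd_card _).trans hG
  have horbA : ∀ a : H, MulAction.orbit A a = orbitOf α a := by
    intro a; ext x
    constructor
    · rintro ⟨⟨φ, g, rfl⟩, rfl⟩; exact ⟨g, rfl⟩
    · rintro ⟨g, rfl⟩; exact ⟨⟨α g, ⟨g, rfl⟩⟩, rfl⟩
  haveI := Fintype.ofFinite H
  have hdvd_orbit : ∀ a : H, (orbitOf α a).ncard ∣ Nat.card A := by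
    intro a
    haveI : Fintype A := Fintype.ofFinite _
    haveI : Fintype ↥(MulAction.orbit A a) := Fintype.ofFinite _
    haveI : Fintype ↥(MulAction.stabilizer A a) := Fintype.ofFinite _
    have h := MulAction.card_orbit_mul_card_stabilizer_eq_card_group A a
    have h2 : (orbitOf α a).ncard = Fintype.card ↥(MulAction.orbit A a) := by
      rw [← Nat.card_eq_fintype_card, ← horbA, Nat.card_coe_set_eq]
    exact ⟨Fintype.card ↥(MulAction.stabilizer A a), by
      rw [h2, Nat.card_eq_fintype_card]; exact h.symm⟩
  -- p divides the cardinality of the image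
  have hpA : p ∣ Nat.card A := by
    by_contra hpA
    have hcop : Nat.Coprime (Nat.card A) p := ((hp.coprime_iff_not_dvd).mpr hpA).symm
    have hAq : Nat.card A ∣ q ^ 2 := (hcop.pow_right 2).dvd_of_dvd_mul_left hAdvd
    obtain ⟨k, hk2, hk⟩ := (Nat.dvd_prime_pow hq).mp hAq
    have hpg : IsPGroup q A := IsPGroup.of_card hk
    have hmodq := hpg.card_modEq_card_fixedPoints H
    have hfixset : MulAction.fixedPoints A H = {h : H | ∀ g : G, α g h = h} := by
      ext x
      simp only [MulAction.mem_fixedPoints, Set.mem_setOf_eq]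
      constructor
      · intro hx g
        exact hx ⟨α g, ⟨g, rfl⟩⟩
      · rintro hx ⟨φ, g, rfl⟩
        exact hx g
    rw [hfixset] at hmodq
    have hcard1 : Nat.card ↥{h : H | ∀ g : G, α g h = h} = 1 := hfix
    rw [hcard1, hH] at hmodq
    have hmm : p * q % q = 1 % q := hmodq
    rw [Nat.mul_mod_left, Nat.mod_eq_of_lt hq1] at hmm
    omega
  -- automorphisms of order p fix P pointwise
  have hfixP : ∀ φ : MulAut H, orderOf φ = p → ∀ x ∈ (P : Subgroup H), φ x = x := by
    intro φ hφ
    have hntP : Nontrivial (P : Subgroup H) := by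
      rw [← Finite.one_lt_card_iff_nontrivial, hPcard]; exact hp1
    obtain ⟨y0, hy0⟩ := exists_ne (1 : (P : Subgroup H))
    set x0 : H := (y0 : H) with hx0def
    have hx0P : x0 ∈ (P : Subgroup H) := y0.2
    have hx0ne : x0 ≠ 1 := fun h => hy0 (Subtype.ext h)
    have hordx0 : orderOf x0 = p := by
      have h2 : orderOf x0 = orderOf y0 :=
        orderOf_injective (P : Subgroup H).subtype Subtype.coe_injective y0
      have h1 : orderOf x0 ∣ p := by
        have h3 := orderOf_dvd_natCard y0
        rw [hPcard] at h3
        rw [h2]; exact h3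
      rcases hp.eq_one_or_self_of_dvd _ h1 with h | h
      · exact absurd (orderOf_eq_one_iff.mp h) hx0ne
      · exact h
    have hzp : Subgroup.zpowers x0 = (P : Subgroup H) := by
      apply Subgroup.eq_of_le_of_card_ge (Subgroup.zpowers_le.mpr hx0P)
      rw [hPcard, Nat.card_zpowers, hordx0]
    have hx0fix : φ x0 = x0 := by
      have hmem : φ x0 ∈ Subgroup.zpowers x0 := by
        rw [hzp]; exact (hPmem φ x0).mpr hx0P
      obtain ⟨k, hk⟩ : ∃ k : ℕ, x0 ^ k = φ x0 :=
        (isOfFinOrder_of_finite x0).mem_powers_iff_mem_zpowers.mpr hmem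
      have hiter : ∀ n : ℕ, (φ ^ n) x0 = x0 ^ (k ^ n) := by
        intro n
        induction n with
        | zero => simp
        | succ n ih =>
          rw [pow_succ' φ n, MulAut.mul_apply, ih, map_pow, ← hk, ← pow_mul, ← pow_succ']
      have h1 : x0 ^ (k ^ p) = x0 ^ 1 := by
        have h2 : (φ ^ p) x0 = x0 := by
          rw [← hφ, pow_orderOf_eq_one φ]; rfl
        rw [hiter p] at h2
        simpa using h2
      have h2 : k ^ p ≡ 1 [MOD p] := by
        have h3 := pow_eq_pow_iff_modEq.mp h1
        rwa [hordx0] at h3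
      have h3 : (k : ZMod p) = 1 := by
        have h4 := (ZMod.natCast_eq_natCast_iff _ _ _).mpr h2
        push_cast at h4
        rwa [ZMod.pow_card] at h4
      have h5 : k ≡ 1 [MOD p] := by
        have := (ZMod.natCast_eq_natCast_iff k 1 p).mp (by exact_mod_cast h3)
        exact this
      rw [← hk]
      calc x0 ^ k = x0 ^ 1 := pow_eq_pow_iff_modEq.mpr (by rwa [hordx0])
        _ = x0 := pow_one x0
    intro x hx
    rw [← hzp] at hx
    obtain ⟨m, hm⟩ : ∃ m : ℕ, x0 ^ m = x :=
      (isOfFinOrder_of_finite x0).mem_powers_iff_mem_zpowers.mpr hx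
    rw [← hm, map_pow, hx0fix]
  -- orbits outside P have size divisible by p
  have houtside : ∀ x : H, x ∉ (P : Subgroup H) → p ∣ (orbitOf α x).ncard := by
    intro x hx
    by_contra hnd
    haveI : Fintype A := Fintype.ofFinite _
    haveI : Fintype ↥(MulAction.orbit A x) := Fintype.ofFinite _
    haveI : Fintype ↥(MulAction.stabilizer A x) := Fintype.ofFinite _
    have horb := MulAction.card_orbit_mul_card_stabilizer_eq_card_group A x
    have hcardorb : Fintype.card ↥(MulAction.orbit A x) = (orbitOf α x).ncard := by
      rw [← Nat.card_eq_fintype_card, ← horbA x, Nat.card_coe_set_eq, horbA]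
    have hpstab : p ∣ Nat.card (MulAction.stabilizer A x) := by
      have h1 : p ∣ (orbitOf α x).ncard * Fintype.card ↥(MulAction.stabilizer A x) := by
        rw [← hcardorb, horb, ← Nat.card_eq_fintype_card]; exact hpA
      rcases (Nat.Prime.dvd_mul hp).mp h1 with h | h
      · exact absurd h hnd
      · rwa [Nat.card_eq_fintype_card]
    obtain ⟨ψ, hψ⟩ := exists_prime_orderOf_dvd_card' p hpstab
    set φ : MulAut H := ((ψ : A) : MulAut H) with hφdef
    have hφord : orderOf φ = p := by
      have e1 : orderOf ((ψ : A)) = orderOf ψ :=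
        orderOf_injective (MulAction.stabilizer A x).subtype Subtype.coe_injective ψ
      have e2 : orderOf φ = orderOf ((ψ : A)) :=
        orderOf_injective A.subtype Subtype.coe_injective (ψ : A)
      rw [e2, e1, hψ]
    have hφx : φ x = x := ψ.2
    set F : Subgroup H :=
      { carrier := {y : H | φ y = y}
        one_mem' := map_one φ
        mul_mem' := fun {a b} ha hb => by
          simp only [Set.mem_setOf_eq] at *
          rw [map_mul, ha, hb]
        inv_mem' := fun {a} ha => by
          simp only [Set.mem_setOf_eq] at *
          rw [map_inv, ha] } with hF
    have hPF : (P : Subgroup H) ≤ F := fun y hy => hfixP φ hφord y hy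
    have hxF : x ∈ F := hφx
    have hpF : p ∣ Nat.card F := hPcard ▸ Subgroup.card_dvd_of_le hPF
    have hFH : Nat.card F ∣ p * q := hH ▸ Subgroup.card_subgroup_dvd_card F
    obtain ⟨t, ht⟩ := hpF
    have htq : t ∣ q := by
      have h1 : p * t ∣ p * q := ht ▸ hFH
      exact (Nat.mul_dvd_mul_iff_left hp.pos).mp h1
    rcases hq.eq_one_or_self_of_dvd t htq with h | h
    · rw [h, mul_one] at ht
      have hPFeq : (P : Subgroup H) = F :=
        Subgroup.eq_of_le_of_card_ge hPF (by rw [hPcard, ht])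
      exact hx (hPFeq ▸ hxF)
    · rw [h] at ht
      have hFtop : F = ⊤ := Subgroup.eq_top_of_card_eq F (by rw [ht, hH])
      have hφ1 : φ = 1 := by
        ext y
        have : y ∈ F := hFtop ▸ Subgroup.mem_top y
        exact this
      rw [hφ1, orderOf_one] at hφord
      exact hp.ne_one hφord.symm
  -- orbit inclusion lemmas
  have horb_subP : ∀ x : H, x ∈ (P : Subgroup H) → x ≠ 1 →
      orbitOf α x ⊆ ((P : Subgroup H) : Set H) \ {1} := by
    intro x hx hne y hy
    obtain ⟨g, rfl⟩ := hy
    refine ⟨(hPmem (α g) x).mpr hx, ?_⟩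
    intro h
    exact hne ((α g).injective (by simpa using h))
  have horb_subPc : ∀ x : H, x ∉ (P : Subgroup H) →
      orbitOf α x ⊆ (((P : Subgroup H) : Set H))ᶜ := by
    intro x hx y hy
    obtain ⟨g, rfl⟩ := hy
    exact fun h => hx ((hPmem (α g) x).mp h)
  have hPset : (((P : Subgroup H)) : Set H).ncard = p := by
    rw [← Nat.card_coe_set_eq]; exact hPcard
  -- exact orbit size outside P
  have hsize_out : ∀ x : H, x ∉ (P : Subgroup H) → (orbitOf α x).ncard = p := by
    intro x hx
    obtain ⟨m, hm⟩ := houtside x hx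
    have hpos : 0 < (orbitOf α x).ncard := by
      rw [Set.ncard_pos (Set.toFinite _)]
      exact ⟨x, mem_orbitOf_self α x⟩
    have hmpos : 0 < m := by
      rcases Nat.eq_zero_or_pos m with h | h
      · rw [h, mul_zero] at hm; omega
      · exact h
    have hle : (orbitOf α x).ncard ≤ p * q - p := by
      have h1 := Set.ncard_le_ncard (horb_subPc x hx) (Set.toFinite _)
      have h4 := Set.ncard_add_ncard_compl (((P : Subgroup H)) : Set H)
      rw [hPset, hH] at h4
      omega
    have hmq : m < q := by
      have hkey : p * (q - 1) = p * q - p := by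
        rw [← Nat.pred_eq_sub_one, Nat.mul_pred]
      have h1 : p * m ≤ p * (q - 1) := by rw [hkey, ← hm]; exact hle
      have h2 : m ≤ q - 1 := Nat.le_of_mul_le_mul_left h1 hp.pos
      omega
    have hmdvd : m ∣ p * q ^ 2 := by
      have h1 : p * m ∣ p * (p * q ^ 2) := by
        rw [← hm]
        have := (hdvd_orbit x).trans hAdvd
        rwa [show p ^ 2 * q ^ 2 = p * (p * q ^ 2) by ring] at this
      exact (Nat.mul_dvd_mul_iff_left hp.pos).mp h1
    have hm1 : m = 1 := by
      by_contra hm1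
      have hr := Nat.minFac_prime hm1
      have hrle : m.minFac ≤ m := Nat.le_of_dvd hmpos (Nat.minFac_dvd m)
      have hrdvd : m.minFac ∣ p * q ^ 2 := (Nat.minFac_dvd m).trans hmdvd
      rcases (Nat.Prime.dvd_mul hr).mp hrdvd with h | h
      · have := (Nat.prime_dvd_prime_iff_eq hr hp).mp h
        omega
      · have := (Nat.prime_dvd_prime_iff_eq hr hq).mp (hr.dvd_of_dvd_pow h)
        omega
    rw [hm, hm1, mul_one]
  -- exact orbit sizes inside P
  have hsize_in : ∀ x : H, x ∈ (P : Subgroup H) → x ≠ 1 →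
      (orbitOf α x).ncard = q ∨ (orbitOf α x).ncard = q ^ 2 := by
    intro x hx hne
    have hle : (orbitOf α x).ncard ≤ p - 1 := by
      have h1 := Set.ncard_le_ncard (horb_subP x hx hne) (Set.toFinite _)
      have h2 : ((((P : Subgroup H)) : Set H) \ {1}).ncard = p - 1 := by
        rw [Set.ncard_diff_singleton_of_mem (P : Subgroup H).one_mem, hPset]
      omega
    have hlt : (orbitOf α x).ncard < p := by omega
    have hdvd2 : (orbitOf α x).ncard ∣ p ^ 2 * q ^ 2 := (hdvd_orbit x).trans hAdvd
    have hq2dvd : (orbitOf α x).ncard ∣ q ^ 2 := by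
      have hcop : Nat.Coprime ((orbitOf α x).ncard) p := by
        refine ((hp.coprime_iff_not_dvd).mpr ?_).symm
        intro h
        have := Nat.le_of_dvd (by
          rw [Set.ncard_pos (Set.toFinite _)]
          exact ⟨x, mem_orbitOf_self α x⟩) h
        omega
      exact (hcop.pow_right 2).dvd_of_dvd_mul_left hdvd2
    have hne1 : (orbitOf α x).ncard ≠ 1 := by
      intro h1
      obtain ⟨a, ha⟩ := Set.ncard_eq_one.mp h1
      have hxa : x = a := by
        have h2 := mem_orbitOf_self α x
        rw [ha] at h2
        exact h2
      have hfixx : ∀ g : G, α g x = x := by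
        intro g
        have hg : α g x ∈ orbitOf α x := ⟨g, rfl⟩
        rw [ha, Set.mem_singleton_iff] at hg
        rw [hg, ← hxa]
      exact hne (hfix' x hfixx)
    obtain ⟨k, hk2, hk⟩ := (Nat.dvd_prime_pow hq).mp hq2dvd
    interval_cases k
    · rw [pow_zero] at hk
      exact absurd hk hne1
    · left; rw [hk, pow_one]
    · right; exact hk
  -- characterization of the level sets
  have hSp : {x : H | (orbitOf α x).ncard = p} = (((P : Subgroup H) : Set H))ᶜ := by
    ext x
    simp only [Set.mem_setOf_eq, Set.mem_compl_iff, SetLike.mem_coe]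
    constructor
    · intro hx hxP
      by_cases h1 : x = 1
      · rw [h1, orbitOf_one, Set.ncard_singleton] at hx
        omega
      · rcases hsize_in x hxP h1 with h | h
        · omega
        · rw [h] at hx
          exact hq2p hx
    · intro hxP
      exact hsize_out x hxP
  have hSq : {x : H | (orbitOf α x).ncard = q} ∪ {x : H | (orbitOf α x).ncard = q ^ 2}
      = ((P : Subgroup H) : Set H) \ {1} := by
    ext x
    simp only [Set.mem_union, Set.mem_setOf_eq, Set.mem_diff, SetLike.mem_coe,
      Set.mem_singleton_iff]
    constructor
    · intro hx
      have hxP : x ∈ (P : Subgroup H) := by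
        by_contra hxP
        have h1 := hsize_out x hxP
        rcases hx with h | h
        · omega
        · rw [h1] at h
          exact hq2p h.symm
      have hx1 : x ≠ 1 := by
        rintro rfl
        rw [orbitOf_one, Set.ncard_singleton] at hx
        have : 1 < q ^ 2 := by nlinarith
        omega
      exact ⟨hxP, hx1⟩
    · rintro ⟨hxP, hx1⟩
      exact hsize_in x hxP hx1
  -- counting
  have hc := countOrbits α
  have hcp : Nat.card {L : Set H // (∃ a : H, L = orbitOf α a) ∧ L.ncard = p} * p
      = p * q - p := by
    rw [hc p, hSp]
    have h4 := Set.ncard_add_ncard_compl (((P : Subgroup H)) : Set H)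
    rw [hPset, hH] at h4
    omega
  have hcq : Nat.card {L : Set H // (∃ a : H, L = orbitOf α a) ∧ L.ncard = q} * q
      + Nat.card {L : Set H // (∃ a : H, L = orbitOf α a) ∧ L.ncard = q ^ 2} * q ^ 2
      = p - 1 := by
    have hdisj : Disjoint {x : H | (orbitOf α x).ncard = q}
        {x : H | (orbitOf α x).ncard = q ^ 2} := by
      rw [Set.disjoint_left]
      intro x h1 h2
      simp only [Set.mem_setOf_eq] at h1 h2
      have : q < q ^ 2 := by nlinarith
      omega
    have hun := Set.ncard_union_eq hdisj (Set.toFinite _) (Set.toFinite _)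
    rw [hSq] at hun
    have hPd : ((((P : Subgroup H)) : Set H) \ {1}).ncard = p - 1 := by
      rw [Set.ncard_diff_singleton_of_mem (P : Subgroup H).one_mem, hPset]
    rw [hPd] at hun
    rw [hc q, hc (q ^ 2)]
    omega
  refine ⟨?_, ?_, ?_⟩
  · intro a ha
    by_cases hxP : a ∈ (P : Subgroup H)
    · by_cases h1 : a = 1
      · rw [h1, orbitOf_one, Set.ncard_singleton] at ha
        omega
      · rcases hsize_in a hxP h1 with h | h
        · exact Or.inr (Or.inl h)
        · exact Or.inr (Or.inr h)
    · exact Or.inl (hsize_out a hxP)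
  · have h1 : p * q - p = (q - 1) * p := by
      rw [Nat.sub_mul, one_mul, mul_comm]
    rw [h1] at hcp
    exact Nat.eq_of_mul_eq_mul_right hp.pos hcp
  · have h1 : (Nat.card {L : Set H // (∃ a : H, L = orbitOf α a) ∧ L.ncard = q}
        + q * Nat.card {L : Set H // (∃ a : H, L = orbitOf α a) ∧ L.ncard = q ^ 2}) * q
        = p - 1 := by
      rw [← hcq]; ring
    exact (Nat.div_eq_of_eq_mul_left hq.pos h1.symm).symm
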